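/- For every t ≥ 2, every n ≥ 1, and every integer p with p_min(t,n) ≤ p ≤ n(n−1)/2, where p_min(t,n) is the minimal path length among t-ary trees with n nodes, there exists a t-ary tree with n nodes and path length exactly p. -/

import Mathlib

/-- A `t`-ary tree: either empty, or a root node with `t` ordered subtrees. -/
inductive TAry (t : ℕ) : Type where
  | nil : TAry t
  | node : (Fin t → TAry t) → TAry t

namespace TAry

variable {t : ℕ}

/-- Number of nodes of a `t`-ary tree. -/
def size : TAry t → ℕ
  | nil => 0
  | node c => 1 + ∑ i, (c i).size

/-- Sum over nodes of `d +` (depth of the node). -/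
def plFrom : TAry t → ℕ → ℕ
  | nil, _ => 0
  | node c, d => d + ∑ i, (c i).plFrom (d + 1)

/-- Path length: the sum of the depths of all nodes. -/
def pathLength (T : TAry t) : ℕ := T.plFrom 0

/-- Number of nodes at depth `j` (the profile `D_j`). -/
def depthCount : ℕ → TAry t → ℕ
  | _, nil => 0
  | 0, node _ => 1
  | j + 1, node c => ∑ i, depthCount j (c i)

/-- Number of leaves (nodes all of whose subtrees are empty). -/
def leaves : TAry t → ℕ
  | nil => 0
  | node c => max 1 (∑ i, (c i).leaves)

end TAry

namespace TAry
variable {t : ℕ}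

/-- Every internal (non-leaf) node has exactly one child. -/
def chain : TAry t → Prop
  | nil => True
  | node c => (∀ i, c i = nil) ∨ ∃ i, c i ≠ nil ∧ chain (c i) ∧ ∀ j, j ≠ i → c j = nil

/-- Number of leaves at depth `j`. -/
def leavesAt : ℕ → TAry t → ℕ
  | _, nil => 0
  | 0, node c => if (∑ i, (c i).size) = 0 then 1 else 0
  | j + 1, node c => ∑ i, leavesAt j (c i)

/-- The subtree of `T` at position `pos` (empty tree if the position is invalid). -/
def getAt : TAry t → List (Fin t) → TAry t
  | T, [] => T
  | nil, _ :: _ => nil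
  | node c, i :: rest => getAt (c i) rest

/-- Replace the subtree of `T` at position `pos` by `τ`. -/
def replaceAt : TAry t → List (Fin t) → TAry t → TAry t
  | _, [], τ => τ
  | nil, _ :: _, _ => nil
  | node c, i :: rest, τ => node (fun j => if j = i then replaceAt (c i) rest τ else c j)

/-- Attach the trees `τs i` at the positions `pos i`, for `i = 0, …, ℓ-1`. -/
def attachAll {ℓ : ℕ} (T : TAry t) (pos : Fin ℓ → List (Fin t)) (τs : Fin ℓ → TAry t) :
    TAry t :=
  (List.finRange ℓ).foldl (fun A i => replaceAt A (pos i) (τs i)) T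

end TAry

/-- The binary entropy function (natural logarithm). -/
noncomputable def binEnt (x : ℝ) : ℝ := -x * Real.log x - (1 - x) * Real.log (1 - x)

/-- Number of `t`-ary trees with exactly `n` nodes. -/
noncomputable def Ct (t n : ℕ) : ℕ := Nat.card {T : TAry t // T.size = n}

/-- Number of `t`-ary trees with path length exactly `p`. -/
noncomputable def Tt (t p : ℕ) : ℕ := Nat.card {T : TAry t // T.pathLength = p}

namespace TAry
variable {t : ℕ}

lemma plFrom_eq : ∀ (T : TAry t) (d : ℕ), T.plFrom d = T.plFrom 0 + d * T.size
  | .nil, d => by simp [TAry.plFrom, TAry.size]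
  | .node c, d => by
      simp only [TAry.plFrom, TAry.size]
      rw [Finset.sum_congr rfl (fun i _ => plFrom_eq (c i) (d+1)),
          Finset.sum_congr rfl (fun i _ => plFrom_eq (c i) 1)]
      simp only [Finset.sum_add_distrib, ← Finset.mul_sum]
      ring

lemma pathLength_node (c : Fin t → TAry t) :
    (TAry.node c).pathLength = ∑ i, (c i).pathLength + ∑ i, (c i).size := by
  show (TAry.node c).plFrom 0 = _
  simp only [TAry.plFrom]
  rw [Finset.sum_congr rfl (fun i _ => plFrom_eq (c i) 1)]
  simp [Finset.sum_add_distrib, pathLength]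

lemma size_node (c : Fin t → TAry t) : (TAry.node c).size = 1 + ∑ i, (c i).size := rfl

lemma choose2_succ (m : ℕ) : (m+1).choose 2 = m.choose 2 + m := by
  rw [Nat.choose_succ_succ]
  simp [Nat.choose_one_right, Nat.add_comm]

lemma choose2_add_le (a b : ℕ) : a.choose 2 + b.choose 2 ≤ (a+b).choose 2 := by
  induction b with
  | zero => simp
  | succ b ih =>
    have h1 := choose2_succ b
    have h2 := choose2_succ (a+b)
    have : a + (b+1) = (a+b) + 1 := by ring
    rw [this, h2, h1]
    omega

lemma sum_choose2_le {ι : Type*} (s : Finset ι) (f : ι → ℕ) :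
    ∑ i ∈ s, (f i).choose 2 ≤ (∑ i ∈ s, f i).choose 2 := by
  classical
  induction s using Finset.induction_on with
  | empty => simp
  | insert _ _ h ih =>
    rw [Finset.sum_insert h, Finset.sum_insert h]
    calc _ ≤ _ + _ := Nat.add_le_add_left ih _
    _ ≤ _ := choose2_add_le _ _

lemma pl_le_choose2 : ∀ T : TAry t, T.pathLength ≤ T.size.choose 2
  | .nil => by simp [pathLength, plFrom, size]
  | .node c => by
    rw [pathLength_node, size_node]
    have h1 : ∑ i, (c i).pathLength ≤ ∑ i, ((c i).size).choose 2 :=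
      Finset.sum_le_sum (fun i _ => pl_le_choose2 (c i))
    have h2 := sum_choose2_le Finset.univ (fun i => (c i).size)
    have h3 := choose2_succ (∑ i, (c i).size)
    have h4 : (1 + ∑ i, (c i).size).choose 2 = (∑ i, (c i).size + 1).choose 2 := by
      rw [Nat.add_comm]
    omega

end TAry

namespace TAry
variable {t : ℕ}

def chainT (ht : 2 ≤ t) : ℕ → TAry t
  | 0 => .nil
  | n+1 => .node (fun j => if j = (⟨0, by omega⟩ : Fin t) then chainT ht n else .nil)

lemma sum_single_fn (i : Fin t) (g : TAry t → ℕ) (hg : g .nil = 0) (X : TAry t) :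
    ∑ j, g (if j = i then X else .nil) = g X := by
  rw [Finset.sum_eq_single i]
  · simp
  · intro b _ hb; simp [hb, hg]
  · simp

lemma chainT_size (ht : 2 ≤ t) : ∀ n, (chainT ht n).size = n
  | 0 => rfl
  | n+1 => by
    rw [chainT, size_node, sum_single_fn _ size rfl, chainT_size ht n, Nat.add_comm]

lemma chainT_pl (ht : 2 ≤ t) : ∀ n, (chainT ht n).pathLength = n.choose 2
  | 0 => rfl
  | n+1 => by
    rw [chainT, pathLength_node, sum_single_fn _ pathLength rfl,
        sum_single_fn _ size rfl, chainT_pl ht n, chainT_size ht n, choose2_succ]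

lemma sum_pair_fn (i i' : Fin t) (hne : i ≠ i') (g : TAry t → ℕ) (hg : g .nil = 0)
    (X Y : TAry t) :
    ∑ j, g (if j = i then X else if j = i' then Y else .nil) = g X + g Y := by
  classical
  rw [← Finset.sum_subset (Finset.subset_univ ({i, i'} : Finset (Fin t)))]
  · rw [Finset.sum_pair hne]
    simp [hne, Ne.symm hne]
  · intro x _ hx
    simp only [Finset.mem_insert, Finset.mem_singleton, not_or] at hx
    simp [hx.1, hx.2, hg]

def broomT (ht : 2 ≤ t) : ℕ → ℕ → TAry t
  | 0, _ => chainT ht 1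
  | a+1, b =>
    if a + 1 ≤ b then chainT ht (a+2)
    else if b ≤ 1 then
      .node (fun j => if j = (⟨0, by omega⟩ : Fin t) then chainT ht a
                      else if j = (⟨1, by omega⟩ : Fin t) then chainT ht 1 else .nil)
    else .node (fun j => if j = (⟨0, by omega⟩ : Fin t) then broomT ht a (b-1) else .nil)

lemma broomT_spec (ht : 2 ≤ t) : ∀ a b, 1 ≤ b → b ≤ a →
    (broomT ht a b).size = a + 1 ∧ (broomT ht a b).pathLength = a.choose 2 + b
  | 0, b, hb, hba => by omega
  | a+1, b, hb, hba => by
    rw [broomT]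
    by_cases h1 : a + 1 ≤ b
    · have : b = a + 1 := by omega
      subst this
      rw [if_pos h1, chainT_size, chainT_pl, choose2_succ]
      exact ⟨rfl, rfl⟩
    · rw [if_neg h1]
      by_cases h2 : b ≤ 1
      · have hb1 : b = 1 := by omega
        have ha1 : 1 ≤ a := by omega
        rw [if_pos h2, size_node, pathLength_node]
        have hne : (⟨0, by omega⟩ : Fin t) ≠ (⟨1, by omega⟩ : Fin t) := by
          simp [Fin.ext_iff]
        rw [sum_pair_fn _ _ hne size rfl, sum_pair_fn _ _ hne pathLength rfl,
            chainT_size, chainT_size, chainT_pl, chainT_pl]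
        have e1 : Nat.choose 1 2 = 0 := rfl
        have e2 := choose2_succ a
        constructor
        · omega
        · omega
      · rw [if_neg h2, size_node, pathLength_node,
            sum_single_fn _ size rfl, sum_single_fn _ pathLength rfl]
        obtain ⟨hs, hp⟩ := broomT_spec ht a (b-1) (by omega) (by omega)
        rw [hs, hp, choose2_succ]
        omega

end TAry

namespace TAry
variable {t : ℕ}

lemma sum_update_fn (g : TAry t → ℕ) (c : Fin t → TAry t) (i : Fin t) (X : TAry t) :
    ∑ j, g (Function.update c i X j) + g (c i) = (∑ j, g (c j)) + g X := by
  classical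
  have h1 : ∀ j, g (Function.update c i X j) =
      Function.update (fun k => g (c k)) i (g X) j := fun j =>
    Function.apply_update (fun _ x => g x) c i X j
  rw [Finset.sum_congr rfl fun j _ => h1 j, Finset.sum_update_of_mem (Finset.mem_univ i),
      Finset.sdiff_singleton_eq_erase]
  have h2 : g (c i) + ∑ x ∈ Finset.univ.erase i, g (c x) = ∑ j, g (c j) :=
    Finset.add_sum_erase Finset.univ (fun x => g (c x)) (Finset.mem_univ i)
  omega

lemma pl_zero_of_size_zero (T : TAry t) (h : T.size = 0) : T.pathLength = 0 := by
  cases T with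
  | nil => rfl
  | node c => simp only [size] at h; omega

lemma inc (ht : 2 ≤ t) (T : TAry t) (h : T.pathLength + 1 ≤ T.size.choose 2) :
    ∃ T' : TAry t, T'.size = T.size ∧ T'.pathLength = T.pathLength + 1 := by
  induction T with
  | nil => simp [pathLength, plFrom, size] at h
  | node c ih =>
    rw [pathLength_node, size_node] at h
    set m := ∑ i, (c i).size with hm
    set P := ∑ i, (c i).pathLength with hP
    have hh : P + 1 ≤ m.choose 2 := by
      have h4 : (1 + m).choose 2 = m.choose 2 + m := by rw [Nat.add_comm]; exact choose2_succ m
      omega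
    by_cases hA : ∃ i, (c i).pathLength + 1 ≤ ((c i).size).choose 2
    · obtain ⟨i, hi⟩ := hA
      obtain ⟨T', hs, hp⟩ := ih i hi
      refine ⟨.node (Function.update c i T'), ?_, ?_⟩
      · rw [size_node, size_node]
        have := sum_update_fn size c i T'
        omega
      · rw [pathLength_node, pathLength_node]
        have h1 := sum_update_fn size c i T'
        have h2 := sum_update_fn pathLength c i T'
        omega
    · push_neg at hA
      have hB : ∀ i, (c i).pathLength = ((c i).size).choose 2 := fun i =>
        le_antisymm (pl_le_choose2 (c i)) (by have := hA i; omega)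
      obtain ⟨i, -, hmax⟩ := Finset.exists_max_image Finset.univ (fun k => (c k).size)
        ⟨(⟨0, by omega⟩ : Fin t), Finset.mem_univ _⟩
      by_cases hj : ∃ j, j ≠ i ∧ 1 ≤ (c j).size
      · obtain ⟨j, hji, hj1⟩ := hj
        set a := (c i).size with ha
        set b := (c j).size with hb
        have hba : b ≤ a := hmax j (Finset.mem_univ j)
        have ha1 : 1 ≤ a := le_trans hj1 hba
        obtain ⟨hbs, hbp⟩ := broomT_spec ht a b hj1 hba
        set base : Fin t → TAry t := fun k => chainT ht ((c k).size) with hbase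
        set c1 : Fin t → TAry t := Function.update base i (broomT ht a b) with hc1
        set c' : Fin t → TAry t := Function.update c1 j (chainT ht (b-1)) with hc'
        have hbs0 : ∑ k, (base k).size = m := by
          rw [hm]; exact Finset.sum_congr rfl fun k _ => chainT_size ht _
        have hbp0 : ∑ k, (base k).pathLength = P := by
          rw [hP]; exact Finset.sum_congr rfl fun k _ => by
            rw [hbase]; simp only []; rw [chainT_pl, ← hB k]
        have hc1j : c1 j = base j := Function.update_of_ne hji _ _
        have e1s : ∑ k, (c1 k).size + (base i).size
            = ∑ k, (base k).size + (broomT ht a b).size :=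
          sum_update_fn size base i (broomT ht a b)
        have e1p : ∑ k, (c1 k).pathLength + (base i).pathLength
            = ∑ k, (base k).pathLength + (broomT ht a b).pathLength :=
          sum_update_fn pathLength base i (broomT ht a b)
        have e2s : ∑ k, (c' k).size + (c1 j).size
            = ∑ k, (c1 k).size + (chainT ht (b-1)).size :=
          sum_update_fn size c1 j (chainT ht (b-1))
        have e2p : ∑ k, (c' k).pathLength + (c1 j).pathLength
            = ∑ k, (c1 k).pathLength + (chainT ht (b-1)).pathLength :=
          sum_update_fn pathLength c1 j (chainT ht (b-1))
        rw [hc1j] at e2s e2p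
        have ebj_s : (base j).size = b := chainT_size ht _
        have ebj_p : (base j).pathLength = b.choose 2 := by
          rw [hbase]; simp only []; rw [chainT_pl]
        have ebi_s : (base i).size = a := chainT_size ht _
        have ebi_p : (base i).pathLength = a.choose 2 := by
          rw [hbase]; simp only []; rw [chainT_pl]
        have ecs : (chainT ht (b-1)).size = b - 1 := chainT_size ht _
        have ecp : (chainT ht (b-1)).pathLength = (b-1).choose 2 := chainT_pl ht _
        have cc : b.choose 2 = (b-1).choose 2 + (b-1) := by
          have hcc := choose2_succ (b-1)
          have hb' : b - 1 + 1 = b := by omega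
          rw [hb'] at hcc
          omega
        rw [hbs0] at e1s
        rw [hbp0] at e1p
        rw [ebi_s, hbs] at e1s
        rw [ebi_p, hbp] at e1p
        rw [ebj_s, ecs] at e2s
        rw [ebj_p, ecp] at e2p
        refine ⟨.node c', ?_, ?_⟩
        · rw [size_node, size_node]
          omega
        · rw [pathLength_node, pathLength_node]
          omega
      · push_neg at hj
        exfalso
        have hm' : m = (c i).size := by
          rw [hm, Finset.sum_eq_single i]
          · intro b _ hb; have := hj b hb; omega
          · intro hi'; exact absurd (Finset.mem_univ i) hi'
        have hp' : P = (c i).pathLength := by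
          rw [hP, Finset.sum_eq_single i]
          · intro b _ hb
            exact pl_zero_of_size_zero _ (by have := hj b hb; omega)
          · intro hi'; exact absurd (Finset.mem_univ i) hi'
        rw [hm', hp', hB i] at hh
        omega

end TAry


/-- For every `p` between the minimal path length of a `t`-ary tree with `n` nodes and
the maximal one `n(n-1)/2`, there is a `t`-ary tree with `n` nodes and path length `p`. -/
theorem stmt8 (t n p : ℕ) (ht : 2 ≤ t) (hn : 1 ≤ n)
    (hlo : sInf {p | ∃ T : TAry t, T.size = n ∧ T.pathLength = p} ≤ p)
    (hhi : p ≤ n * (n - 1) / 2) :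
    ∃ T : TAry t, T.size = n ∧ T.pathLength = p := by
  classical
  have hne : Set.Nonempty {p | ∃ T : TAry t, T.size = n ∧ T.pathLength = p} :=
    ⟨n.choose 2, TAry.chainT ht n, TAry.chainT_size ht n, TAry.chainT_pl ht n⟩
  obtain ⟨T0, hT0s, hT0p⟩ := Nat.sInf_mem hne
  have hhi' : p ≤ n.choose 2 := by rw [Nat.choose_two_right]; exact hhi
  have key : ∀ k (T : TAry t), T.size = n → T.pathLength + k ≤ n.choose 2 →
      ∃ T' : TAry t, T'.size = n ∧ T'.pathLength = T.pathLength + k := by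
    intro k
    induction k with
    | zero => intro T hs _; exact ⟨T, hs, rfl⟩
    | succ k ih =>
      intro T hs hk
      obtain ⟨T', hs', hp'⟩ := ih T hs (by omega)
      obtain ⟨T'', hs'', hp''⟩ := TAry.inc ht T' (by rw [hp', hs']; omega)
      exact ⟨T'', by rw [hs'', hs'], by omega⟩
  obtain ⟨T, hTs, hTp⟩ :=
    key (p - sInf {p | ∃ T : TAry t, T.size = n ∧ T.pathLength = p}) T0 hT0s (by omega)
  exact ⟨T, hTs, by omega⟩
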